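/- Let K ≥ 1 be an integer, let s ≥ 0, i ≥ 0, n > 0 be real numbers, and let t ∈ (0, 1] satisfy t·(i + n) ≥ K·n. Then log₂(1 + s/(i + n)) − log₂(1 + (t·s)/(t·i + n)) ≤ log₂(1 + 1/K), i.e., the per-user rate loss of the power-reduced private message relative to the full-power NoRS message is at most log₂(1 + 1/K). -/

import Mathlib

/-- If the power-splitting ratio `t ∈ (0,1]` satisfies `t (i + n) ≥ K n`, then the
per-user rate loss of the power-reduced private message relative to the full-power
NoRS message is at most `log₂(1 + 1/K)`. -/
theorem stmt_4 (K : ℕ) (hK : 1 ≤ K) (s i n t : ℝ)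
    (hs : 0 ≤ s) (hi : 0 ≤ i) (hn : 0 < n) (ht : t ∈ Set.Ioc (0 : ℝ) 1)
    (hcond : (K : ℝ) * n ≤ t * (i + n)) :
    Real.logb 2 (1 + s / (i + n)) - Real.logb 2 (1 + t * s / (t * i + n))
      ≤ Real.logb 2 (1 + 1 / (K : ℝ)) := by
  obtain ⟨ht0, ht1⟩ := ht
  have hK1 : (1 : ℝ) ≤ (K : ℝ) := by exact_mod_cast hK
  have hK0 : (0 : ℝ) < (K : ℝ) := by linarith
  have hD1 : 0 < i + n := by linarith
  have hD2 : 0 < t * i + n := by positivity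
  have hA : 0 < 1 + s / (i + n) := by positivity
  have hB : 0 < 1 + t * s / (t * i + n) := by positivity
  have h1 : 1 + s / (i + n) ≤ (1 + 1 / (K : ℝ)) * (1 + t * s / (t * i + n)) := by
    have hKne : (K : ℝ) ≠ 0 := hK0.ne'
    field_simp
    suffices hsuff : (i + n + s) * ((K : ℝ) * (t * i + n)) ≤ ((K : ℝ) + 1) * (t * i + n + t * s) * (i + n) by linarith [hsuff]
    have h1 : (K : ℝ) * (t * i + n) ≤ ((K : ℝ) + 1) * (t * (i + n)) := by
      nlinarith [mul_nonneg (mul_nonneg hK0.le ht0.le) hn.le]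
    have h2 : t * (i + n + s) ≤ t * i + n + t * s := by
      nlinarith [mul_nonneg hn.le (sub_nonneg.2 ht1)]
    calc (i + n + s) * ((K : ℝ) * (t * i + n))
        ≤ (i + n + s) * (((K : ℝ) + 1) * (t * (i + n))) :=
          mul_le_mul_of_nonneg_left h1 (by positivity)
      _ = (((K : ℝ) + 1) * (i + n)) * (t * (i + n + s)) := by ring
      _ ≤ (((K : ℝ) + 1) * (i + n)) * (t * i + n + t * s) :=
          mul_le_mul_of_nonneg_left h2 (by positivity)
      _ = ((K : ℝ) + 1) * (t * i + n + t * s) * (i + n) := by ring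
  have key : (1 + s / (i + n)) / (1 + t * s / (t * i + n)) ≤ 1 + 1 / (K : ℝ) := by
    rw [div_le_iff₀ hB]; linarith
  calc Real.logb 2 (1 + s / (i + n)) - Real.logb 2 (1 + t * s / (t * i + n))
      = Real.logb 2 ((1 + s / (i + n)) / (1 + t * s / (t * i + n))) := by
        rw [Real.logb_div hA.ne' hB.ne']
    _ ≤ Real.logb 2 (1 + 1 / (K : ℝ)) :=
        Real.logb_le_logb_of_le (by norm_num) (div_pos hA hB) key
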